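/- Let (D, y) be a left Kan pseudomonad on a 2-category K and let A be an object such that y_A : A → DA admits a left adjoint a with invertible counit. Then for every object B of K and every 1-cell g : B → A, the left Kan extension of g along y_B : B → DB exists with invertible unit; in particular A admits the structure of a pseudo-D-algebra. -/

import Mathlib

open CategoryTheory Bicategory

universe w v u

variable {K : Type u} [Bicategory.{w, v} K]

/-- `(g', δ)` exhibits `g'` as a left Kan extension of `g` along `y`. -/
def IsLeftKan {A' A C : K} (y : A' ⟶ A) (g : A' ⟶ C) (g' : A ⟶ C) (δ : g ⟶ y ≫ g') : Prop :=
  ∀ (h : A ⟶ C) (α : g ⟶ y ≫ h), ∃! θ : g' ⟶ h, δ ≫ y ◁ θ = α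

/-- A left Kan pseudomonad `(D, y)` on a bicategory `K`. -/
structure LeftKanPseudomonad (K : Type u) [Bicategory.{w, v} K] where
  /-- the action on objects -/
  obj : K → K
  /-- the unit 1-cells `y_A : A ⟶ DA` -/
  unit : ∀ A : K, A ⟶ obj A
  /-- the extension operation `f ↦ f^𝔻` -/
  ext : ∀ {A B : K}, (A ⟶ obj B) → (obj A ⟶ obj B)
  /-- the 2-cell exhibiting the extension -/
  extCell : ∀ {A B : K} (f : A ⟶ obj B), f ⟶ unit A ≫ ext f
  /-- the extension 2-cell is invertible -/
  extCell_iso : ∀ {A B : K} (f : A ⟶ obj B), IsIso (extCell f)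
  /-- `(f^𝔻, 𝔻_f)` is a left Kan extension of `f` along `y_A` -/
  ext_isKan : ∀ {A B : K} (f : A ⟶ obj B), IsLeftKan (unit A) f (ext f) (extCell f)
  /-- the identity 2-cell exhibits `𝟙 (DA)` as a left Kan extension of `y_A` along `y_A` -/
  unit_isKan : ∀ A : K, IsLeftKan (unit A) (unit A) (𝟙 (obj A)) (ρ_ (unit A)).inv
  /-- extensions `g^𝔻` preserve the left Kan extensions `(f^𝔻, 𝔻_f)` -/
  ext_preserves : ∀ {A B C : K} (f : A ⟶ obj B) (g : B ⟶ obj C),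
    IsLeftKan (unit A) (f ≫ ext g) (ext f ≫ ext g)
      (extCell f ▷ ext g ≫ (α_ (unit A) (ext f) (ext g)).hom)


/-- A pseudo-`D`-algebra structure on `C`: a choice, for every `f : B ⟶ C`, of a left Kan
extension of `f` along `y_B` with invertible unit, preserved by the extensions `(−)^𝔻`. -/
structure PseudoDAlgebra (D : LeftKanPseudomonad K) (C : K) where
  ext : ∀ {B : K}, (B ⟶ C) → (D.obj B ⟶ C)
  cell : ∀ {B : K} (f : B ⟶ C), f ⟶ D.unit B ≫ ext f
  cell_iso : ∀ {B : K} (f : B ⟶ C), IsIso (cell f)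
  isKan : ∀ {B : K} (f : B ⟶ C), IsLeftKan (D.unit B) f (ext f) (cell f)
  preserves : ∀ {A B : K} (f : A ⟶ D.obj B) (g : B ⟶ C),
    IsLeftKan (D.unit A) (f ≫ ext g) (D.ext f ≫ ext g)
      (D.extCell f ▷ ext g ≫ (α_ (D.unit A) (D.ext f) (ext g)).hom)

section Mates

variable {C C' A' A : K} {l : C ⟶ C'} {r : C' ⟶ C}

lemma IsLeftKan.ofIso {A' A C : K} {y : A' ⟶ A} {g₂ : A' ⟶ C} {g'₂ : A ⟶ C}
    {δ : g₂ ⟶ y ≫ g'₂} (H : IsLeftKan y g₂ g'₂ δ)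
    {g : A' ⟶ C} {g' : A ⟶ C} (e : g ≅ g₂) (e' : g'₂ ≅ g')
    {δ' : g ⟶ y ≫ g'} (hδ' : δ' = e.hom ≫ δ ≫ y ◁ e'.hom) :
    IsLeftKan y g g' δ' := by
  intro h α
  obtain ⟨θ, hθ, huniq⟩ := H h (e.inv ≫ α)
  refine ⟨e'.inv ≫ θ, ?_, ?_⟩
  · show δ' ≫ y ◁ (e'.inv ≫ θ) = α
    rw [hδ', Bicategory.whiskerLeft_comp, Category.assoc, Category.assoc,
      whiskerLeft_hom_inv_assoc, hθ, Iso.hom_inv_id_assoc]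
  · intro θ'' h''
    have key : δ ≫ y ◁ (e'.hom ≫ θ'') = e.inv ≫ α := by
      rw [Bicategory.whiskerLeft_comp, ← Category.assoc, ← h'', hδ']
      simp
    rw [← huniq _ key, Iso.inv_hom_id_assoc]

lemma mate_up_down (adj : Bicategory.Adjunction l r) {x : A ⟶ C} {h : A ⟶ C'} (θ' : x ≫ l ⟶ h) :
    ((ρ_ x).inv ≫ x ◁ adj.unit ≫ (α_ x l r).inv ≫ θ' ▷ r) ▷ l ≫ (α_ h r l).hom ≫
      h ◁ adj.counit ≫ (ρ_ h).hom = θ' := by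
  calc
    _ = 𝟙 _ ⊗≫ x ◁ adj.unit ▷ l ⊗≫ (θ' ▷ (r ≫ l) ≫ h ◁ adj.counit) ⊗≫ 𝟙 _ := by
      bicategory
    _ = 𝟙 _ ⊗≫ x ◁ leftZigzag adj.unit adj.counit ⊗≫ θ' ⊗≫ 𝟙 _ := by
      rw [← whisker_exchange]; bicategory
    _ = θ' := by rw [adj.left_triangle]; bicategory

lemma mate_down_up (adj : Bicategory.Adjunction l r) {x : A ⟶ C} {h : A ⟶ C'} (θ : x ⟶ h ≫ r) :
    (ρ_ x).inv ≫ x ◁ adj.unit ≫ (α_ x l r).inv ≫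
      (θ ▷ l ≫ (α_ h r l).hom ≫ h ◁ adj.counit ≫ (ρ_ h).hom) ▷ r = θ := by
  calc
    _ = 𝟙 _ ⊗≫ (x ◁ adj.unit ≫ θ ▷ (l ≫ r)) ⊗≫ h ◁ (adj.counit ▷ r) ⊗≫ 𝟙 _ := by
      bicategory
    _ = θ ⊗≫ h ◁ rightZigzag adj.unit adj.counit ⊗≫ 𝟙 _ := by
      rw [whisker_exchange]; bicategory
    _ = θ := by rw [adj.right_triangle]; bicategory

lemma mate_up'_down (adj : Bicategory.Adjunction l r) {y : A' ⟶ A} {g : A' ⟶ C} {h : A ⟶ C'}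
    (α : g ≫ l ⟶ y ≫ h) :
    ((ρ_ g).inv ≫ g ◁ adj.unit ≫ (α_ g l r).inv ≫ α ▷ r ≫ (α_ y h r).hom) ▷ l ≫
      (α_ y (h ≫ r) l).hom ≫ y ◁ ((α_ h r l).hom ≫ h ◁ adj.counit ≫ (ρ_ h).hom) = α := by
  calc
    _ = 𝟙 _ ⊗≫ g ◁ adj.unit ▷ l ⊗≫ (α ▷ (r ≫ l) ≫ (y ≫ h) ◁ adj.counit) ⊗≫ 𝟙 _ := by
      bicategory
    _ = 𝟙 _ ⊗≫ g ◁ leftZigzag adj.unit adj.counit ⊗≫ α ⊗≫ 𝟙 _ := by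
      rw [← whisker_exchange]; bicategory
    _ = α := by rw [adj.left_triangle]; bicategory

lemma mate_down_natural (adj : Bicategory.Adjunction l r) {y : A' ⟶ A} {g : A' ⟶ C} {g' : A ⟶ C}
    {h : A ⟶ C'} (δ : g ⟶ y ≫ g') (θ' : g' ≫ l ⟶ h) :
    (ρ_ g).inv ≫ g ◁ adj.unit ≫ (α_ g l r).inv ≫
      ((δ ▷ l ≫ (α_ y g' l).hom) ≫ y ◁ θ') ▷ r ≫ (α_ y h r).hom =
    δ ≫ y ◁ ((ρ_ g').inv ≫ g' ◁ adj.unit ≫ (α_ g' l r).inv ≫ θ' ▷ r) := by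
  calc
    _ = 𝟙 _ ⊗≫ (g ◁ adj.unit ≫ δ ▷ (l ≫ r)) ⊗≫ y ◁ (θ' ▷ r) ⊗≫ 𝟙 _ := by
      bicategory
    _ = _ := by rw [whisker_exchange]; bicategory

lemma IsLeftKan.postcomp {y : A' ⟶ A} {g : A' ⟶ C} {g' : A ⟶ C}
    {δ : g ⟶ y ≫ g'} (H : IsLeftKan y g g' δ)
    {l : C ⟶ C'} {r : C' ⟶ C} (adj : Bicategory.Adjunction l r) :
    IsLeftKan y (g ≫ l) (g' ≫ l) (δ ▷ l ≫ (α_ y g' l).hom) := by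
  intro h α
  obtain ⟨θ, hθ, huniq⟩ := H (h ≫ r)
    ((ρ_ g).inv ≫ g ◁ adj.unit ≫ (α_ g l r).inv ≫ α ▷ r ≫ (α_ y h r).hom)
  refine ⟨θ ▷ l ≫ (α_ h r l).hom ≫ h ◁ adj.counit ≫ (ρ_ h).hom, ?_, ?_⟩
  · show (δ ▷ l ≫ (α_ y g' l).hom) ≫
      y ◁ (θ ▷ l ≫ (α_ h r l).hom ≫ h ◁ adj.counit ≫ (ρ_ h).hom) = α
    have h1 : (ρ_ g).inv ≫ g ◁ adj.unit ≫ (α_ g l r).inv ≫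
        ((δ ▷ l ≫ (α_ y g' l).hom) ≫
          y ◁ (θ ▷ l ≫ (α_ h r l).hom ≫ h ◁ adj.counit ≫ (ρ_ h).hom)) ▷ r ≫
        (α_ y h r).hom =
        (ρ_ g).inv ≫ g ◁ adj.unit ≫ (α_ g l r).inv ≫ α ▷ r ≫ (α_ y h r).hom := by
      rw [mate_down_natural adj δ _, mate_down_up adj θ, hθ]
    have h2 := congrArg (fun χ => χ ▷ l ≫ (α_ y (h ≫ r) l).hom ≫
      y ◁ ((α_ h r l).hom ≫ h ◁ adj.counit ≫ (ρ_ h).hom)) h1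
    exact (mate_up'_down adj _).symm.trans (h2.trans (mate_up'_down adj α))
  · intro θ'' h''
    have key : δ ≫ y ◁ ((ρ_ g').inv ≫ g' ◁ adj.unit ≫ (α_ g' l r).inv ≫ θ'' ▷ r) =
        (ρ_ g).inv ≫ g ◁ adj.unit ≫ (α_ g l r).inv ≫ α ▷ r ≫ (α_ y h r).hom := by
      rw [← mate_down_natural adj δ θ'', h'']
    rw [← mate_up_down adj θ'', huniq _ key]

end Mates

/-- if `y_A` admits a left adjoint `a` with invertible counit, then every
`g : B ⟶ A` admits a left Kan extension along `y_B` with invertible unit; in particular `A`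
admits the structure of a pseudo-`D`-algebra. -/
theorem pseudoAlgebra_of_reflector (D : LeftKanPseudomonad K) (A : K)
    (a : D.obj A ⟶ A) (adj : Bicategory.Adjunction a (D.unit A)) (hcounit : IsIso adj.counit) :
    (∀ (B : K) (g : B ⟶ A), ∃ (g' : D.obj B ⟶ A) (δ : g ⟶ D.unit B ≫ g'),
      IsLeftKan (D.unit B) g g' δ ∧ IsIso δ) ∧
    Nonempty (PseudoDAlgebra D A) := by
  haveI := hcounit
  have kan : ∀ (B : K) (g : B ⟶ A),
      IsLeftKan (D.unit B) g (D.ext (g ≫ D.unit A) ≫ a)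
        ((ρ_ g).inv ≫ g ◁ inv adj.counit ≫ (α_ g (D.unit A) a).inv ≫
          (D.extCell (g ≫ D.unit A) ▷ a ≫
            (α_ (D.unit B) (D.ext (g ≫ D.unit A)) a).hom)) := by
    intro B g
    refine ((D.ext_isKan (g ≫ D.unit A)).postcomp adj).ofIso
      ((ρ_ g).symm ≪≫ whiskerLeftIso g (asIso adj.counit).symm ≪≫
        (α_ g (D.unit A) a).symm) (Iso.refl _) ?_
    simp
  have iso : ∀ (B : K) (g : B ⟶ A),
      IsIso ((ρ_ g).inv ≫ g ◁ inv adj.counit ≫ (α_ g (D.unit A) a).inv ≫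
        (D.extCell (g ≫ D.unit A) ▷ a ≫
          (α_ (D.unit B) (D.ext (g ≫ D.unit A)) a).hom)) := by
    intro B g
    haveI := D.extCell_iso (g ≫ D.unit A)
    infer_instance
  have pres : ∀ {A' B : K} (f : A' ⟶ D.obj B) (g : B ⟶ A),
      IsLeftKan (D.unit A') (f ≫ (D.ext (g ≫ D.unit A) ≫ a))
        (D.ext f ≫ (D.ext (g ≫ D.unit A) ≫ a))
        (D.extCell f ▷ (D.ext (g ≫ D.unit A) ≫ a) ≫
          (α_ (D.unit A') (D.ext f) (D.ext (g ≫ D.unit A) ≫ a)).hom) := by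
    intro A' B f g
    refine ((D.ext_preserves f (g ≫ D.unit A)).postcomp adj).ofIso
      (α_ f (D.ext (g ≫ D.unit A)) a).symm
      (α_ (D.ext f) (D.ext (g ≫ D.unit A)) a) ?_
    simp only [Iso.symm_hom]
    bicategory
  exact ⟨fun B g => ⟨_, _, kan B g, iso B g⟩,
    ⟨⟨fun {B} g => D.ext (g ≫ D.unit A) ≫ a,
      fun {B} g => (ρ_ g).inv ≫ g ◁ inv adj.counit ≫ (α_ g (D.unit A) a).inv ≫
        (D.extCell (g ≫ D.unit A) ▷ a ≫
          (α_ (D.unit B) (D.ext (g ≫ D.unit A)) a).hom),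
      fun {B} g => iso B g, fun {B} g => kan B g, fun {A'} {B} f g => pres f g⟩⟩⟩
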